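/- Let κ ≥ 3 be a cardinal and let α ≥ 1 be a countable ordinal. Then (T_κ^{[α]}, d) is a real tree and every point of T_κ^{[α]} has valence κ. -/

import Mathlib

open Set Filter

noncomputable section

/-- `C` is a valid label set for the valence cardinal `κ`:
`|C| = κ` if `κ` is infinite and `|C| + 1 = κ` (i.e. `|C| = κ - 1`) if `κ` is finite. -/
def IsLabelSet (κ : Cardinal) (C : Type) : Prop :=
  (Cardinal.aleph0 ≤ κ → Cardinal.mk C = κ) ∧ (κ < Cardinal.aleph0 → Cardinal.mk C + 1 = κ)

/-- An ordinal is countable. -/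
def IsCountableOrdinal (o : Ordinal) : Prop := o.card ≤ Cardinal.aleph0

/-- One-step Cantor–Bendixson derivative of a set: its non-isolated points. -/
def cbStep {X : Type*} [TopologicalSpace X] (A : Set X) : Set X :=
  {x | x ∈ A ∧ AccPt x (Filter.principal A)}

/-- The iterated Cantor–Bendixson derivative of a set. -/
def cbDeriv {X : Type*} [TopologicalSpace X] (A : Set X) (o : Ordinal) : Set X :=
  Ordinal.limitRecOn o A (fun _ ih => cbStep ih)
    (fun o _ ih => ⋂ (o' : Ordinal) (h : o' < o), ih o' h)

/-- The Cantor–Bendixson rank of a set: the least ordinal `γ` such that the `(γ+1)`-st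
Cantor–Bendixson derivative equals the `γ`-th one. -/
def cbRank {X : Type*} [TopologicalSpace X] (A : Set X) : Ordinal :=
  sInf {γ | cbDeriv A (γ + 1) = cbDeriv A γ}

theorem cbDeriv_zero {X : Type*} [TopologicalSpace X] (A : Set X) : cbDeriv A 0 = A :=
  Ordinal.limitRecOn_zero ..

theorem cbDeriv_one {X : Type*} [TopologicalSpace X] (A : Set X) :
    cbDeriv A 1 = cbStep A := by
  have : (1 : Ordinal) = Order.succ 0 := by
    rw [← Ordinal.add_one_eq_succ, zero_add]
  rw [cbDeriv, this, Ordinal.limitRecOn_succ]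
  rw [← cbDeriv, cbDeriv_zero]

theorem cbStep_empty {X : Type*} [TopologicalSpace X] : cbStep (∅ : Set X) = ∅ := by
  ext x; simp [cbStep]

theorem cbRank_empty {X : Type*} [TopologicalSpace X] : cbRank (∅ : Set X) = 0 := by
  refine le_antisymm ?_ zero_le
  refine csInf_le' ?_
  show cbDeriv (∅ : Set X) (0 + 1) = cbDeriv (∅ : Set X) 0
  rw [zero_add, cbDeriv_one, cbDeriv_zero, cbStep_empty]

/-- A point of Dyubina's universal real tree over the label set `C` (with distinguished label
`z`): a function `(-∞, ρ) → C`, encoded as a total function on `ℝ` which takes the value `z`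
on `[ρ, ∞)`, which is eventually `z` near `-∞` and piecewise constant from the right. -/
structure UTree (C : Type) (z : C) where
  ρ : ℝ
  f : ℝ → C
  apply_eq_of_ge : ∀ t, ρ ≤ t → f t = z
  eventually_zero : ∃ s, s ≤ ρ ∧ ∀ t, t < s → f t = z
  piecewise_const : ∀ t, t < ρ → ∃ ε > 0, ∀ u, t ≤ u → u ≤ t + ε → u < ρ → f u = f t

namespace UTree

variable {C : Type} {z : C}

theorem ext' {a b : UTree C z} (h1 : a.ρ = b.ρ) (h2 : a.f = b.f) : a = b := by
  cases a; cases b; cases h1; cases h2; rfl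

/-- The partial order `⪯` : `a ⪯ b` iff `a` is the restriction of `b` to `(-∞, ρ_a)`. -/
protected def le (a b : UTree C z) : Prop :=
  a.ρ ≤ b.ρ ∧ ∀ t, t < a.ρ → a.f t = b.f t

/-- The strict order `≺`. -/
protected def lt (a b : UTree C z) : Prop := a.le b ∧ a ≠ b

/-- The set of times up to which `a` and `b` agree. -/
def agreeSet (a b : UTree C z) : Set ℝ :=
  {t | t ≤ min a.ρ b.ρ ∧ ∀ u, u < t → a.f u = b.f u}

theorem agreeSet_nonempty (a b : UTree C z) : (agreeSet a b).Nonempty := by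
  obtain ⟨s₁, hs₁, h₁⟩ := a.eventually_zero
  obtain ⟨s₂, hs₂, h₂⟩ := b.eventually_zero
  refine ⟨min s₁ s₂, le_min ((min_le_left _ _).trans hs₁) ((min_le_right _ _).trans hs₂), ?_⟩
  intro u hu
  rw [h₁ u (lt_of_lt_of_le hu (min_le_left _ _)), h₂ u (lt_of_lt_of_le hu (min_le_right _ _))]

theorem agreeSet_bddAbove (a b : UTree C z) : BddAbove (agreeSet a b) :=
  ⟨min a.ρ b.ρ, fun _ ht => ht.1⟩

/-- `ρ_{a ∧ b}`, the height of the wedge of `a` and `b`. -/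
def wedgeρ (a b : UTree C z) : ℝ := sSup (agreeSet a b)

theorem wedgeρ_le_min (a b : UTree C z) : wedgeρ a b ≤ min a.ρ b.ρ :=
  csSup_le (agreeSet_nonempty a b) fun _ ht => ht.1

theorem agree_of_lt_wedgeρ (a b : UTree C z) {u : ℝ} (hu : u < wedgeρ a b) :
    a.f u = b.f u := by
  obtain ⟨t, ht, hut⟩ := exists_lt_of_lt_csSup (agreeSet_nonempty a b) hu
  exact ht.2 u hut

theorem le_wedgeρ {a b : UTree C z} {t : ℝ} (ht : t ∈ agreeSet a b) : t ≤ wedgeρ a b :=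
  le_csSup (agreeSet_bddAbove a b) ht

theorem wedgeρ_comm (a b : UTree C z) : wedgeρ a b = wedgeρ b a := by
  unfold wedgeρ agreeSet
  congr 1
  ext t
  constructor <;> rintro ⟨h1, h2⟩ <;>
    exact ⟨by rwa [min_comm], fun u hu => (h2 u hu).symm⟩

theorem wedgeρ_self (a : UTree C z) : wedgeρ a a = a.ρ := by
  refine le_antisymm ((wedgeρ_le_min a a).trans (by simp)) ?_
  exact le_wedgeρ ⟨by simp, fun _ _ => rfl⟩

/-- Restriction of `a` to `(-∞, s)` for `s ≤ ρ_a`. -/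
def restrict (a : UTree C z) (s : ℝ) (hs : s ≤ a.ρ) : UTree C z where
  ρ := s
  f := fun t => if t < s then a.f t else z
  apply_eq_of_ge := fun t ht => by
    show (if t < s then a.f t else z) = z
    rw [if_neg (not_lt.mpr ht)]
  eventually_zero := by
    obtain ⟨s', hs', h'⟩ := a.eventually_zero
    refine ⟨min s' s, min_le_right _ _, fun t ht => ?_⟩
    show (if t < s then a.f t else z) = z
    by_cases h : t < s
    · rw [if_pos h]; exact h' t (lt_of_lt_of_le ht (min_le_left _ _))
    · rw [if_neg h]
  piecewise_const := fun t ht => by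
    obtain ⟨ε, hε, h⟩ := a.piecewise_const t (lt_of_lt_of_le ht hs)
    refine ⟨ε, hε, fun u hu1 hu2 hu3 => ?_⟩
    show (if u < s then a.f u else z) = (if t < s then a.f t else z)
    rw [if_pos hu3, if_pos ht]
    exact h u hu1 hu2 (lt_of_lt_of_le hu3 hs)

/-- The wedge `a ∧ b`: the restriction of `a` to `(-∞, ρ_{a ∧ b})`. -/
def wedge (a b : UTree C z) : UTree C z :=
  a.restrict (wedgeρ a b) ((wedgeρ_le_min a b).trans (min_le_left _ _))

theorem min_wedgeρ_le (a b c : UTree C z) :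
    min (wedgeρ a b) (wedgeρ b c) ≤ wedgeρ a c := by
  refine le_wedgeρ ⟨le_min ?_ ?_, fun u hu => ?_⟩
  · exact (min_le_left _ _).trans ((wedgeρ_le_min a b).trans (min_le_left _ _))
  · exact (min_le_right _ _).trans ((wedgeρ_le_min b c).trans (min_le_right _ _))
  · have h1 : a.f u = b.f u :=
      agree_of_lt_wedgeρ a b (lt_of_lt_of_le hu (min_le_left _ _))
    have h2 : b.f u = c.f u :=
      agree_of_lt_wedgeρ b c (lt_of_lt_of_le hu (min_le_right _ _))
    exact h1.trans h2

/-- The metric `d(a,b) = ρ_a + ρ_b - 2 ρ_{a ∧ b}` on the universal real tree. -/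
instance : MetricSpace (UTree C z) where
  dist a b := a.ρ + b.ρ - 2 * wedgeρ a b
  dist_self a := by simp [wedgeρ_self]; ring
  dist_comm a b := by simp only [wedgeρ_comm a b]; ring
  dist_triangle a b c := by
    have hmin := min_wedgeρ_le a b c
    have h1 : wedgeρ a b ≤ b.ρ := (wedgeρ_le_min a b).trans (min_le_right _ _)
    have h2 : wedgeρ b c ≤ b.ρ := (wedgeρ_le_min b c).trans (min_le_left _ _)
    rcases min_cases (wedgeρ a b) (wedgeρ b c) with ⟨heq, hle⟩ | ⟨heq, hle⟩ <;>
      (rw [heq] at hmin; show a.ρ + c.ρ - 2 * wedgeρ a c ≤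
        (a.ρ + b.ρ - 2 * wedgeρ a b) + (b.ρ + c.ρ - 2 * wedgeρ b c); linarith)
  eq_of_dist_eq_zero := by
    intro a b h
    have h1 : wedgeρ a b ≤ a.ρ := (wedgeρ_le_min a b).trans (min_le_left _ _)
    have h2 : wedgeρ a b ≤ b.ρ := (wedgeρ_le_min a b).trans (min_le_right _ _)
    have hd : a.ρ + b.ρ - 2 * wedgeρ a b = 0 := h
    have ha : a.ρ = wedgeρ a b := by linarith
    have hb : b.ρ = wedgeρ a b := by linarith
    refine ext' (ha.trans hb.symm) (funext fun t => ?_)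
    by_cases ht : t < wedgeρ a b
    · exact agree_of_lt_wedgeρ a b ht
    · rw [a.apply_eq_of_ge t (ha.le.trans (not_lt.mp ht)),
        b.apply_eq_of_ge t (hb.le.trans (not_lt.mp ht))]

theorem dist_def (a b : UTree C z) : dist a b = a.ρ + b.ρ - 2 * wedgeρ a b := rfl

/-- The point `c_ℓ`: the constant function `(-∞, ℓ) → C` with value `z`. -/
def cconst (ℓ : ℝ) : UTree C z where
  ρ := ℓ
  f := fun _ => z
  apply_eq_of_ge := fun _ _ => rfl
  eventually_zero := ⟨ℓ, le_refl ℓ, fun _ _ => rfl⟩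
  piecewise_const := fun _ _ => ⟨1, one_pos, fun _ _ _ _ => rfl⟩

/-- The set of points at which `a` is locally non-constant from the left, whose closure is the
set `P_a`. -/
def badSet (a : UTree C z) : Set ℝ :=
  {t | t < a.ρ ∧ ∀ ε > 0, ∃ u ∈ Icc (t - ε) t, ∃ v ∈ Icc (t - ε) t, a.f u ≠ a.f v}

/-- The set `P_a`. -/
def Pset (a : UTree C z) : Set ℝ := closure (badSet a)

/-- The complexity of `a`: the Cantor–Bendixson rank of `P_a`. -/
def comp (a : UTree C z) : Ordinal := cbRank (Pset a)

/-- The complexity of a pair `a ≺ b`: the Cantor–Bendixson rank of `P_b ∩ [ρ_a, ρ_b]`. -/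
def pairComp (a b : UTree C z) : Ordinal := cbRank (Pset b ∩ Icc a.ρ b.ρ)

/-- `τ_a`: the maximum of all `s ≤ ρ_a` such that `a` is `z` below `s`. -/
def tau (a : UTree C z) : ℝ := sSup {s | s ≤ a.ρ ∧ ∀ t, t < s → a.f t = z}

/-- The tree `T_κ^{[α]}` of points of complexity at most `α`. -/
def level (z : C) (α : Ordinal) : Set (UTree C z) := {a | comp a ≤ α}

theorem Pset_cconst (ℓ : ℝ) : Pset (cconst ℓ : UTree C z) = ∅ := by
  have : badSet (cconst ℓ : UTree C z) = ∅ := by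
    ext t
    simp only [badSet, mem_setOf_eq, mem_empty_iff_false, iff_false, not_and]
    intro _
    push_neg
    exact ⟨1, one_pos, fun u _ v _ => rfl⟩
  rw [Pset, this, closure_empty]

theorem comp_cconst (ℓ : ℝ) : comp (cconst ℓ : UTree C z) = 0 := by
  rw [comp, Pset_cconst, cbRank_empty]

theorem cconst_mem_level {ℓ : ℝ} (α : Ordinal) : (cconst ℓ : UTree C z) ∈ level z α := by
  show comp _ ≤ α
  rw [comp_cconst]
  exact zero_le

/-- The canonical line `L_0 = {c_ℓ : ℓ ∈ ℝ}`. -/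
def L0 (z : C) : Set (UTree C z) := Set.range fun ℓ => (cconst ℓ : UTree C z)

/-- The extension of `a` by the label `c` on `[ρ_a, ρ_a + 1)`. -/
def extend (a : UTree C z) (c : C) : UTree C z where
  ρ := a.ρ + 1
  f := fun t => if t < a.ρ then a.f t else if t < a.ρ + 1 then c else z
  apply_eq_of_ge := fun t ht => by
    show (if t < a.ρ then a.f t else if t < a.ρ + 1 then c else z) = z
    rw [if_neg (not_lt.mpr (by linarith)), if_neg (not_lt.mpr ht)]
  eventually_zero := by
    obtain ⟨s, hs, h⟩ := a.eventually_zero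
    refine ⟨min s a.ρ, by have := min_le_right s a.ρ; linarith, fun t ht => ?_⟩
    show (if t < a.ρ then a.f t else if t < a.ρ + 1 then c else z) = z
    rw [if_pos (lt_of_lt_of_le ht (min_le_right _ _))]
    exact h t (lt_of_lt_of_le ht (min_le_left _ _))
  piecewise_const := by
    intro t ht
    by_cases htρ : t < a.ρ
    · obtain ⟨ε, hε, h⟩ := a.piecewise_const t htρ
      refine ⟨min ε ((a.ρ - t) / 2), lt_min hε (by linarith), fun u hu1 hu2 _ => ?_⟩
      have hu3 : u < a.ρ := by
        have := hu2.trans (add_le_add le_rfl (min_le_right _ _))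
        linarith
      show (if u < a.ρ then a.f u else if u < a.ρ + 1 then c else z) =
        (if t < a.ρ then a.f t else if t < a.ρ + 1 then c else z)
      rw [if_pos hu3, if_pos htρ]
      exact h u hu1 (hu2.trans (add_le_add le_rfl (min_le_left _ _))) hu3
    · refine ⟨(a.ρ + 1 - t) / 2, by linarith, fun u hu1 hu2 _ => ?_⟩
      have h1 : ¬u < a.ρ := by push_neg at htρ ⊢; linarith
      have h2 : u < a.ρ + 1 := by linarith
      show (if u < a.ρ then a.f u else if u < a.ρ + 1 then c else z) =
        (if t < a.ρ then a.f t else if t < a.ρ + 1 then c else z)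
      rw [if_neg h1, if_pos h2, if_neg htρ, if_pos ht]

end UTree

/-- A subset of a metric space is (geodesically) convex if it contains every point
metrically between two of its points. -/
def MetricConvex {X : Type*} [MetricSpace X] (S : Set X) : Prop :=
  ∀ x ∈ S, ∀ y ∈ S, ∀ w, dist x w + dist w y = dist x y → w ∈ S

/-- `D` is a direction at `x`: a connected component of the complement of `{x}`. -/
def IsDirectionAt {X : Type*} [TopologicalSpace X] (x : X) (D : Set X) : Prop :=
  ∃ y, y ≠ x ∧ D = connectedComponentIn {w | w ≠ x} y

/-- The valence of a space at a point: the number of connected components of the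
complement of that point. -/
def valenceAt {X : Type*} [TopologicalSpace X] (x : X) : Cardinal :=
  Cardinal.mk {D : Set X // IsDirectionAt x D}

/-- A real tree: a geodesic metric space in which any two points are joined by a unique arc. -/
def IsRealTree (X : Type*) [MetricSpace X] : Prop :=
  (∀ x y : X, ∃ γ : ℝ → X, γ 0 = x ∧ γ (dist x y) = y ∧
      ∀ s ∈ Icc (0 : ℝ) (dist x y), ∀ t ∈ Icc (0 : ℝ) (dist x y),
        dist (γ s) (γ t) = |s - t|) ∧
  (∀ (x y : X) (γ₁ γ₂ : Path x y), Function.Injective γ₁ → Function.Injective γ₂ →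
      Set.range γ₁ = Set.range γ₂)

section CBL
variable {X : Type*} [TopologicalSpace X]

theorem cbDeriv_succ (A : Set X) (o : Ordinal) :
    cbDeriv A (Order.succ o) = cbStep (cbDeriv A o) :=
  Ordinal.limitRecOn_succ ..

theorem cbDeriv_add_one (A : Set X) (o : Ordinal) :
    cbDeriv A (o + 1) = cbStep (cbDeriv A o) := by
  rw [Ordinal.add_one_eq_succ, cbDeriv_succ]

theorem cbDeriv_limit (A : Set X) {o : Ordinal} (ho : Order.IsSuccLimit o) :
    cbDeriv A o = ⋂ (o' : Ordinal) (_ : o' < o), cbDeriv A o' :=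
  Ordinal.limitRecOn_limit _ _ _ _ ho

theorem cbStep_subset (A : Set X) : cbStep A ⊆ A := fun _ hx => hx.1

theorem cbStep_mono {A B : Set X} (h : A ⊆ B) : cbStep A ⊆ cbStep B :=
  fun _ hx => ⟨h hx.1, hx.2.mono (principal_mono.mpr h)⟩

theorem cbDeriv_mono {A B : Set X} (h : A ⊆ B) (o : Ordinal) :
    cbDeriv A o ⊆ cbDeriv B o := by
  induction o using Ordinal.limitRecOn with
  | zero => rw [cbDeriv_zero, cbDeriv_zero]; exact h
  | add_one o ih => rw [cbDeriv_add_one, cbDeriv_add_one]; exact cbStep_mono ih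
  | limit o ho ih =>
    rw [cbDeriv_limit A ho, cbDeriv_limit B ho]
    exact iInter_mono fun o' => iInter_mono' fun h' => ⟨h', ih o' h'⟩

theorem cbDeriv_anti (A : Set X) {o o' : Ordinal} (h : o ≤ o') :
    cbDeriv A o' ⊆ cbDeriv A o := by
  induction o' using Ordinal.limitRecOn with
  | zero => rw [nonpos_iff_eq_zero.mp h]
  | add_one o'' ih =>
    rw [Ordinal.add_one_eq_succ] at h ⊢
    rcases (Order.le_succ_iff_eq_or_le.mp h) with h' | h'
    · rw [h']
    · rw [cbDeriv_succ]
      exact (cbStep_subset _).trans (ih h')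
  | limit o'' ho ih =>
    rcases eq_or_lt_of_le h with h' | h'
    · rw [h']
    · rw [cbDeriv_limit A ho]
      exact (iInter_subset _ o).trans (iInter_subset _ h')

theorem cbDeriv_subset (A : Set X) (o : Ordinal) : cbDeriv A o ⊆ A := by
  have := cbDeriv_anti A (show (0 : Ordinal) ≤ o from zero_le)
  rwa [cbDeriv_zero] at this

theorem cbStep_eq_inter (A : Set X) : cbStep A = A ∩ derivedSet A := rfl

theorem IsClosed.cbStep' [T1Space X] {A : Set X} (h : IsClosed A) : IsClosed (cbStep A) := by
  rw [cbStep_eq_inter]; exact h.inter (isClosed_derivedSet A)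

theorem isClosed_cbDeriv [T1Space X] {A : Set X} (h : IsClosed A) (o : Ordinal) :
    IsClosed (cbDeriv A o) := by
  induction o using Ordinal.limitRecOn with
  | zero => rwa [cbDeriv_zero]
  | add_one o ih => rw [cbDeriv_add_one]; exact ih.cbStep'
  | limit o ho ih =>
    rw [cbDeriv_limit A ho]
    exact isClosed_iInter fun o' => isClosed_iInter fun h' => ih o' h'

theorem not_accPt_principal_singleton [T1Space X] (x s : X) :
    ¬ AccPt x (𝓟 ({s} : Set X)) := by
  rw [accPt_iff_nhds]
  intro h
  by_cases hs : s = x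
  · obtain ⟨y, ⟨-, hy⟩, hyx⟩ := h univ univ_mem
    exact hyx ((mem_singleton_iff.mp hy).trans hs)
  · obtain ⟨y, ⟨hy1, hy2⟩, -⟩ := h {s}ᶜ (compl_singleton_mem_nhds (Ne.symm hs))
    exact hy1 hy2

theorem cbStep_union_singleton [T1Space X] {A : Set X} (hA : IsClosed A) (s : X) :
    cbStep (A ∪ {s}) = cbStep A := by
  apply subset_antisymm
  · rintro x ⟨_, hx2⟩
    rw [← sup_principal, accPt_sup] at hx2
    rcases hx2 with hx2 | hx2
    · have hxA : x ∈ A := by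
        have := derivedSet_subset_closure A hx2
        rwa [hA.closure_eq] at this
      exact ⟨hxA, hx2⟩
    · exact absurd hx2 (not_accPt_principal_singleton x s)
  · rintro x ⟨hx1, hx2⟩
    exact ⟨Or.inl hx1, hx2.mono (principal_mono.mpr subset_union_left)⟩

theorem cbDeriv_union_singleton [T1Space X] {A : Set X} (hA : IsClosed A) (s : X)
    {o : Ordinal} (ho : 1 ≤ o) : cbDeriv (A ∪ {s}) o = cbDeriv A o := by
  induction o using Ordinal.limitRecOn with
  | zero => exact absurd ho (by simp)
  | add_one o' ih =>
    rw [cbDeriv_add_one, cbDeriv_add_one]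
    rcases eq_zero_or_pos o' with h0 | h0
    · rw [h0, cbDeriv_zero, cbDeriv_zero, cbStep_union_singleton hA]
    · rw [ih (Order.one_le_iff_pos.mpr h0)]
  | limit o' ho' ih =>
    have h1 : (1 : Ordinal) < o' := Ordinal.one_lt_of_isSuccLimit ho'
    rw [cbDeriv_limit _ ho', cbDeriv_limit A ho']
    apply subset_antisymm
    · intro x hx
      simp only [mem_iInter] at hx ⊢
      intro i hi
      rcases eq_zero_or_pos i with h0 | h0
      · subst h0
        rw [cbDeriv_zero]
        have := hx 1 h1
        rw [ih 1 h1 le_rfl] at this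
        exact cbDeriv_subset A 1 this
      · rw [← ih i hi (Order.one_le_iff_pos.mpr h0)]
        exact hx i hi
    · intro x hx
      simp only [mem_iInter] at hx ⊢
      intro i hi
      rcases eq_zero_or_pos i with h0 | h0
      · subst h0
        rw [cbDeriv_zero]
        exact Or.inl (by rw [← cbDeriv_zero A]; exact hx 0 (ho'.pos))
      · rw [ih i hi (Order.one_le_iff_pos.mpr h0)]
        exact hx i hi

theorem exists_cbDeriv_stab {X : Type} [TopologicalSpace X] (A : Set X) :
    ∃ γ, cbDeriv A (γ + 1) = cbDeriv A γ := by
  by_contra h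
  push_neg at h
  have hstrict : ∀ {o o' : Ordinal}, o < o' → cbDeriv A o' ⊂ cbDeriv A o := by
    intro o o' hlt
    refine ⟨cbDeriv_anti A hlt.le, fun hsub => ?_⟩
    refine h o (subset_antisymm (cbDeriv_anti A (by rw [Ordinal.add_one_eq_succ]; exact Order.le_succ o)) ?_)
    exact hsub.trans (cbDeriv_anti A (by rw [Ordinal.add_one_eq_succ, Order.succ_le_iff]; exact hlt))
  have hinj : Function.Injective (cbDeriv A) := by
    intro o o' he
    by_contra hne
    rcases lt_or_gt_of_ne hne with hl | hl
    · exact (hstrict hl).2 he.subset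
    · exact (hstrict hl).2 he.symm.subset
  exact not_small_ordinal.{0} (small_of_injective hinj)

theorem cbDeriv_rank_empty {X : Type} [MetricSpace X] [CompleteSpace X] {A : Set X}
    (hA : IsClosed A) (hc : A.Countable) : cbDeriv A (cbRank A) = ∅ := by
  obtain ⟨γ, hγ⟩ := exists_cbDeriv_stab A
  have hmem : cbDeriv A (cbRank A + 1) = cbDeriv A (cbRank A) :=
    csInf_mem (⟨γ, hγ⟩ : {γ | cbDeriv A (γ + 1) = cbDeriv A γ}.Nonempty)
  set D := cbDeriv A (cbRank A) with hD
  have hDc : IsClosed D := isClosed_cbDeriv hA _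
  have hpre : Preperfect D := by
    intro x hx
    have hx' : x ∈ cbDeriv A (cbRank A + 1) := hmem ▸ hx
    rw [cbDeriv_add_one] at hx'
    exact hx'.2
  rcases eq_empty_or_nonempty D with hemp | hne
  · exact hemp
  · exfalso
    obtain ⟨f, hrange, -, hinj⟩ := (Perfect.mk hDc hpre).exists_nat_bool_injection hne
    have hcnt : (range f).Countable := (hc.mono (cbDeriv_subset A _)).mono hrange
    have h1 : Cardinal.mk (ℕ → Bool) ≤ Cardinal.aleph0 := by
      rw [← Cardinal.mk_range_eq f hinj]
      exact hcnt.le_aleph0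
    have h2 : Cardinal.aleph0 < Cardinal.mk (ℕ → Bool) := by
      have : Cardinal.mk (ℕ → Bool) = 2 ^ Cardinal.aleph0 := by
        simp [Cardinal.mk_arrow]
      rw [this]
      exact Cardinal.cantor _
    exact absurd h1 (not_le.mpr h2)

theorem cbRank_le_iff {X : Type} [MetricSpace X] [CompleteSpace X] {A : Set X}
    (hA : IsClosed A) (hc : A.Countable) (α : Ordinal) :
    cbRank A ≤ α ↔ cbDeriv A α = ∅ := by
  constructor
  · intro h
    have h1 := cbDeriv_rank_empty hA hc
    exact eq_empty_of_subset_empty (h1 ▸ cbDeriv_anti A h)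
  · intro h
    refine csInf_le' ?_
    show cbDeriv A (α + 1) = cbDeriv A α
    rw [h, cbDeriv_add_one, h]
    ext x
    simp [cbStep]

end CBL


namespace UTree
variable {C : Type} {z : C}

theorem restrict_rho (a : UTree C z) (s : ℝ) (hs : s ≤ a.ρ) : (a.restrict s hs).ρ = s := rfl

theorem restrict_f_of_lt (a : UTree C z) {s t : ℝ} (hs : s ≤ a.ρ) (ht : t < s) :
    (a.restrict s hs).f t = a.f t := if_pos ht

theorem restrict_f_of_ge (a : UTree C z) {s t : ℝ} (hs : s ≤ a.ρ) (ht : ¬ t < s) :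
    (a.restrict s hs).f t = z := if_neg ht

theorem restrict_congr (a : UTree C z) {s s' : ℝ} (h : s = s') (hs : s ≤ a.ρ) :
    a.restrict s hs = a.restrict s' (h ▸ hs) := by subst h; rfl

theorem restrict_self (a : UTree C z) (hs : a.ρ ≤ a.ρ) : a.restrict a.ρ hs = a := by
  refine ext' rfl (funext fun t => ?_)
  by_cases ht : t < a.ρ
  · exact if_pos ht
  · exact (if_neg ht).trans (a.apply_eq_of_ge t (not_lt.mp ht)).symm

theorem wedgeρ_le_rho_left (a b : UTree C z) : wedgeρ a b ≤ a.ρ :=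
  (wedgeρ_le_min a b).trans (min_le_left _ _)

theorem wedgeρ_le_rho_right (a b : UTree C z) : wedgeρ a b ≤ b.ρ :=
  (wedgeρ_le_min a b).trans (min_le_right _ _)

theorem wedgeρ_restrict_restrict (a b : UTree C z) {s s' : ℝ} (hs : s ≤ a.ρ) (hs' : s' ≤ b.ρ) :
    wedgeρ (a.restrict s hs) (b.restrict s' hs') = min (min s s') (wedgeρ a b) := by
  apply le_antisymm
  · apply csSup_le (agreeSet_nonempty _ _)
    intro t ht
    refine le_min ht.1 (le_wedgeρ ⟨?_, fun u hu => ?_⟩)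
    · exact le_min ((ht.1.trans (min_le_left _ _)).trans hs)
        ((ht.1.trans (min_le_right _ _)).trans hs')
    · have h1 := ht.2 u hu
      rw [restrict_f_of_lt a hs (lt_of_lt_of_le hu (ht.1.trans (min_le_left _ _))),
        restrict_f_of_lt b hs' (lt_of_lt_of_le hu (ht.1.trans (min_le_right _ _)))] at h1
      exact h1
  · refine le_wedgeρ ⟨min_le_left _ _, fun u hu => ?_⟩
    have hu1 : u < s := lt_of_lt_of_le hu ((min_le_left _ _).trans (min_le_left _ _))
    have hu2 : u < s' := lt_of_lt_of_le hu ((min_le_left _ _).trans (min_le_right _ _))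
    have hu3 : u < wedgeρ a b := lt_of_lt_of_le hu (min_le_right _ _)
    rw [restrict_f_of_lt a hs hu1, restrict_f_of_lt b hs' hu2]
    exact agree_of_lt_wedgeρ a b hu3

theorem wedgeρ_restrict_left (a b : UTree C z) {s : ℝ} (hs : s ≤ a.ρ) :
    wedgeρ (a.restrict s hs) b = min s (wedgeρ a b) := by
  conv_lhs => rw [← restrict_self b le_rfl]
  rw [wedgeρ_restrict_restrict, min_assoc, min_eq_right (wedgeρ_le_rho_right a b)]

theorem wedgeρ_restrict_right (a b : UTree C z) {s : ℝ} (hs : s ≤ b.ρ) :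
    wedgeρ a (b.restrict s hs) = min s (wedgeρ a b) := by
  rw [wedgeρ_comm, wedgeρ_restrict_left, wedgeρ_comm]

theorem dist_restrict_restrict (a b : UTree C z) {s s' : ℝ} (hs : s ≤ a.ρ) (hs' : s' ≤ b.ρ) :
    dist (a.restrict s hs) (b.restrict s' hs') = s + s' - 2 * min (min s s') (wedgeρ a b) := by
  rw [dist_def, wedgeρ_restrict_restrict]
  rfl

theorem sub_two_min_eq_abs (p q : ℝ) : p + q - 2 * min p q = |p - q| := by
  rcases le_total p q with h | h
  · rw [min_eq_left h, abs_of_nonpos (by linarith)]; ring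
  · rw [min_eq_right h, abs_of_nonneg (by linarith)]; ring

theorem dist_restrict_restrict_self (a : UTree C z) {s s' : ℝ} (hs : s ≤ a.ρ) (hs' : s' ≤ a.ρ) :
    dist (a.restrict s hs) (a.restrict s' hs') = |s - s'| := by
  rw [dist_restrict_restrict, wedgeρ_self, min_eq_left ((min_le_left _ _).trans hs),
    sub_two_min_eq_abs]

theorem lt_wedgeρ_of_agree {a b : UTree C z} {h : ℝ} (ha : h < a.ρ) (hb : h < b.ρ)
    (hag : ∀ u, u < h → a.f u = b.f u) (hh : a.f h = b.f h) : h < wedgeρ a b := by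
  obtain ⟨ε₁, hε₁, h₁⟩ := a.piecewise_const h ha
  obtain ⟨ε₂, hε₂, h₂⟩ := b.piecewise_const h hb
  set δ := min (min ε₁ ε₂) (min ((a.ρ - h)/2) ((b.ρ - h)/2)) with hδ
  have hδ0 : 0 < δ := lt_min (lt_min hε₁ hε₂) (lt_min (by linarith) (by linarith))
  have hδ1 : δ ≤ ε₁ := (min_le_left _ _).trans (min_le_left _ _)
  have hδ2 : δ ≤ ε₂ := (min_le_left _ _).trans (min_le_right _ _)
  have hδ3 : δ ≤ (a.ρ - h)/2 := (min_le_right _ _).trans (min_le_left _ _)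
  have hδ4 : δ ≤ (b.ρ - h)/2 := (min_le_right _ _).trans (min_le_right _ _)
  have hmem : h + δ ∈ agreeSet a b := by
    constructor
    · exact le_min (by linarith) (by linarith)
    · intro u hu
      rcases lt_or_ge u h with h' | h'
      · exact hag u h'
      · have e1 : a.f u = a.f h := h₁ u h' (by linarith) (by linarith)
        have e2 : b.f u = b.f h := h₂ u h' (by linarith) (by linarith)
        rw [e1, e2, hh]
  have := le_wedgeρ hmem
  linarith

theorem eq_of_wedgeρ_eq {a b : UTree C z} (h1 : wedgeρ a b = a.ρ) (h2 : a.ρ = b.ρ) : a = b := by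
  refine ext' h2 (funext fun t => ?_)
  by_cases ht : t < a.ρ
  · exact agree_of_lt_wedgeρ a b (h1 ▸ ht)
  · rw [a.apply_eq_of_ge t (not_lt.mp ht), b.apply_eq_of_ge t (h2 ▸ not_lt.mp ht)]

theorem restrict_eq_restrict_of_le_wedgeρ (a b : UTree C z) {s : ℝ} (h : s ≤ wedgeρ a b)
    (ha : s ≤ a.ρ) (hb : s ≤ b.ρ) : a.restrict s ha = b.restrict s hb := by
  refine ext' rfl (funext fun t => ?_)
  by_cases ht : t < s
  · rw [restrict_f_of_lt a ha ht, restrict_f_of_lt b hb ht]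
    exact agree_of_lt_wedgeρ a b (lt_of_lt_of_le ht h)
  · rw [restrict_f_of_ge a ha ht, restrict_f_of_ge b hb ht]

theorem restrict_eq_right (a b : UTree C z) (h : wedgeρ a b = b.ρ) (hb : b.ρ ≤ a.ρ) :
    a.restrict b.ρ hb = b := by
  rw [restrict_eq_restrict_of_le_wedgeρ a b h.ge hb le_rfl, restrict_self]

theorem rho_lt_of_not_lt {q c : UTree C z} (h : ¬ wedgeρ q c < c.ρ) (hne : q ≠ c) :
    c.ρ < q.ρ := by
  have hw : wedgeρ q c = c.ρ := le_antisymm (wedgeρ_le_rho_right q c) (not_lt.mp h)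
  rcases lt_or_eq_of_le (hw ▸ wedgeρ_le_rho_left q c) with h' | h'
  · exact h'
  · exact absurd (eq_of_wedgeρ_eq (hw.trans h') h'.symm) hne

theorem wedgeρ_eq_of_not_lt {q c : UTree C z} (h : ¬ wedgeρ q c < c.ρ) :
    wedgeρ q c = c.ρ := le_antisymm (wedgeρ_le_rho_right q c) (not_lt.mp h)

end UTree



namespace UTree
variable {C : Type} {z : C}

/-- The direction of `q` at `c`: `none` means "downwards/sideways", `some v` means `q`
strictly extends `c` with next label `v`. -/
def dirOpt (c q : UTree C z) : Option C :=
  if wedgeρ q c < c.ρ then none else some (q.f c.ρ)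

theorem dir_locally_const (c : UTree C z) {q : UTree C z} (hq : q ≠ c) :
    ∃ r > 0, ∀ q' : UTree C z, dist q q' < r → q' ≠ c ∧ dirOpt c q' = dirOpt c q := by
  by_cases hlt : wedgeρ q c < c.ρ
  · refine ⟨c.ρ - wedgeρ q c, by linarith, fun q' hd => ?_⟩
    have hkey : wedgeρ q' c < c.ρ := by
      rcases le_or_gt (wedgeρ q q') (wedgeρ q c) with hc1 | hc1
      · have hdd : dist q q' = q.ρ + q'.ρ - 2 * wedgeρ q q' := dist_def q q'
        have h1 : wedgeρ q c ≤ q.ρ := wedgeρ_le_rho_left q c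
        have h2 : wedgeρ q' c ≤ q'.ρ := wedgeρ_le_rho_left q' c
        linarith
      · have h3 := min_wedgeρ_le q q' c
        rcases min_cases (wedgeρ q q') (wedgeρ q' c) with ⟨he, hle⟩ | ⟨he, hle⟩ <;>
          rw [he] at h3 <;> linarith
    refine ⟨fun h => by rw [h, wedgeρ_self] at hkey; exact lt_irrefl _ hkey, ?_⟩
    rw [dirOpt, dirOpt, if_pos hkey, if_pos hlt]
  · have hw : wedgeρ q c = c.ρ := wedgeρ_eq_of_not_lt hlt
    have hρ : c.ρ < q.ρ := rho_lt_of_not_lt hlt hq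
    refine ⟨(q.ρ - c.ρ)/2, by linarith, fun q' hd => ?_⟩
    have hdd : dist q q' = q.ρ + q'.ρ - 2 * wedgeρ q q' := dist_def q q'
    have h1 : wedgeρ q q' ≤ q'.ρ := wedgeρ_le_rho_right q q'
    have hwq : c.ρ < wedgeρ q q' := by linarith
    have hq'ρ : c.ρ < q'.ρ := lt_of_lt_of_le hwq h1
    have hkey : wedgeρ q' c = c.ρ := by
      apply le_antisymm (wedgeρ_le_rho_right q' c)
      have h3 := min_wedgeρ_le q' q c
      rw [wedgeρ_comm q' q] at h3
      rcases min_cases (wedgeρ q q') (wedgeρ q c) with ⟨he, hle⟩ | ⟨he, hle⟩ <;>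
        rw [he] at h3
      · linarith
      · rw [hw] at h3; linarith
    have hlab : q'.f c.ρ = q.f c.ρ := (agree_of_lt_wedgeρ q q' hwq).symm
    refine ⟨fun h => by rw [h] at hq'ρ; exact lt_irrefl _ hq'ρ, ?_⟩
    rw [dirOpt, dirOpt, if_neg (not_lt.mpr hkey.ge), if_neg hlt, hlab]

theorem dirOpt_const {c : UTree C z} {Y : Type*} [TopologicalSpace Y] [PreconnectedSpace Y]
    {f : Y → UTree C z} (hf : Continuous f) (hne : ∀ t, f t ≠ c) (s t : Y) :
    dirOpt c (f s) = dirOpt c (f t) := by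
  have hop : ∀ (P : Option C → Prop), IsOpen {y : Y | P (dirOpt c (f y))} := by
    intro P
    rw [isOpen_iff_mem_nhds]
    intro y hy
    obtain ⟨r, hr, hloc⟩ := dir_locally_const c (hne y)
    refine mem_nhds_iff.mpr ⟨(fun y' => dist (f y) (f y')) ⁻¹' Iio r, fun y' hy' => ?_,
      isOpen_Iio.preimage (continuous_const.dist hf), by simpa using hr⟩
    show P (dirOpt c (f y'))
    rw [(hloc (f y') hy').2]
    exact hy
  by_contra hts
  obtain ⟨y, -, hy⟩ := isPreconnected_univ (u := {y : Y | dirOpt c (f y) = dirOpt c (f s)})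
    (v := {y : Y | dirOpt c (f y) ≠ dirOpt c (f s)})
    (hop (· = dirOpt c (f s))) (hop (· ≠ dirOpt c (f s)))
    (fun y _ => em _) ⟨s, trivial, rfl⟩ ⟨t, trivial, Ne.symm hts⟩
  exact hy.2 hy.1

theorem exists_eq_of_dirOpt_ne {c : UTree C z} {Y : Type*} [TopologicalSpace Y]
    [PreconnectedSpace Y] {f : Y → UTree C z} (hf : Continuous f) (s t : Y)
    (h : dirOpt c (f s) ≠ dirOpt c (f t)) : ∃ y, f y = c := by
  by_contra h'
  push_neg at h'
  exact h (dirOpt_const hf h' s t)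

theorem badSet_subset_Iio (a : UTree C z) : badSet a ⊆ Iio a.ρ := fun _ ht => ht.1

theorem badSet_countable (a : UTree C z) : (badSet a).Countable := by
  have key : ∀ t ∈ badSet a, ∃ q : ℚ, t < (q : ℝ) ∧
      ∀ v, t ≤ v → (v : ℝ) ≤ q → v < a.ρ → a.f v = a.f t := by
    intro t ht
    obtain ⟨ε, hε, hconst⟩ := a.piecewise_const t ht.1
    obtain ⟨r, hr1, hr2⟩ := exists_rat_btwn (show t < t + ε by linarith)
    exact ⟨r, hr1, fun v h1 h2 h3 => hconst v h1 (by linarith) h3⟩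
  choose! Q hQ1 hQ2 using key
  have main : ∀ t1 t2, t1 ∈ badSet a → t2 ∈ badSet a → Q t1 = Q t2 → ¬ t1 < t2 := by
    intro t1 t2 h1 h2 he hlt
    obtain ⟨u, hu, v, hv, hne⟩ := h2.2 (t2 - t1) (by linarith)
    have hu1 : t1 ≤ u := by have := hu.1; linarith
    have hv1 : t1 ≤ v := by have := hv.1; linarith
    have hqt : (t2 : ℝ) < Q t1 := by rw [he]; exact hQ1 t2 h2
    have e1 : a.f u = a.f t1 :=
      hQ2 t1 h1 u hu1 (by linarith [hu.2]) (lt_of_le_of_lt hu.2 h2.1)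
    have e2 : a.f v = a.f t1 :=
      hQ2 t1 h1 v hv1 (by linarith [hv.2]) (lt_of_le_of_lt hv.2 h2.1)
    exact hne (e1.trans e2.symm)
  refine Set.countable_iff_exists_injOn.mpr
    ⟨fun t => Encodable.encode (Q t), fun t1 h1 t2 h2 he => ?_⟩
  have heq : Q t1 = Q t2 := Encodable.encode_injective he
  rcases lt_trichotomy t1 t2 with h | h | h
  · exact absurd h (main t1 t2 h1 h2 heq)
  · exact h
  · exact absurd h (main t2 t1 h2 h1 heq.symm)

theorem Pset_subset (a : UTree C z) : Pset a ⊆ badSet a ∪ {a.ρ} := by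
  intro t ht
  by_cases htρ : t = a.ρ
  · exact Or.inr (by simp [htρ])
  left
  have htle : t ≤ a.ρ :=
    closure_minimal ((badSet_subset_Iio a).trans Iio_subset_Iic_self) isClosed_Iic ht
  have htlt : t < a.ρ := lt_of_le_of_ne htle htρ
  refine ⟨htlt, fun ε hε => ?_⟩
  obtain ⟨ε₀, hε₀, hconst⟩ := a.piecewise_const t htlt
  set ε₁ := min ε₀ ((a.ρ - t)/2) with hε₁def
  have hε₁0 : 0 < ε₁ := lt_min hε₀ (by linarith)
  have hε₁1 : ε₁ ≤ ε₀ := min_le_left _ _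
  have hε₁2 : ε₁ ≤ (a.ρ - t)/2 := min_le_right _ _
  obtain ⟨s, hs, hds⟩ := Metric.mem_closure_iff.mp ht (min ε ε₁) (lt_min hε hε₁0)
  rw [Real.dist_eq] at hds
  have habs := abs_lt.mp hds
  have hd1 : t - s < ε := lt_of_lt_of_le habs.2 (min_le_left _ _)
  have hd2 : s - t < ε₁ := by have := habs.1; have := min_le_right ε ε₁; linarith
  have hsle : s ≤ t := by
    by_contra hgt
    push_neg at hgt
    obtain ⟨u, hu, v, hv, hne⟩ := hs.2 (s - t) (by linarith)
    have hcu : a.f u = a.f t := hconst u (by have := hu.1; linarith)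
      (by have := hu.2; linarith) (by have := hu.2; linarith)
    have hcv : a.f v = a.f t := hconst v (by have := hv.1; linarith)
      (by have := hv.2; linarith) (by have := hv.2; linarith)
    exact hne (hcu.trans hcv.symm)
  obtain ⟨u, hu, v, hv, hne⟩ := hs.2 (s - (t - ε)) (by linarith)
  exact ⟨u, ⟨by have := hu.1; linarith, by have := hu.2; linarith⟩,
    v, ⟨by have := hv.1; linarith, by have := hv.2; linarith⟩, hne⟩

theorem Pset_isClosed (a : UTree C z) : IsClosed (Pset a) := isClosed_closure

theorem Pset_countable (a : UTree C z) : (Pset a).Countable :=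
  ((badSet_countable a).union (Set.countable_singleton a.ρ)).mono (Pset_subset a)

theorem comp_le_iff (a : UTree C z) (α : Ordinal) :
    comp a ≤ α ↔ cbDeriv (Pset a) α = ∅ :=
  cbRank_le_iff (Pset_isClosed a) (Pset_countable a) α

theorem badSet_restrict (a : UTree C z) {s : ℝ} (hs : s ≤ a.ρ) :
    badSet (a.restrict s hs) = badSet a ∩ Iio s := by
  ext t
  constructor
  · rintro ⟨ht1, ht2⟩
    have hts : t < s := ht1
    refine ⟨⟨lt_of_lt_of_le hts hs, fun ε hε => ?_⟩, hts⟩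
    obtain ⟨u, hu, v, hv, hne⟩ := ht2 ε hε
    refine ⟨u, hu, v, hv, ?_⟩
    rwa [restrict_f_of_lt a hs (lt_of_le_of_lt hu.2 hts),
      restrict_f_of_lt a hs (lt_of_le_of_lt hv.2 hts)] at hne
  · rintro ⟨⟨ht1, ht2⟩, hts⟩
    refine ⟨hts, fun ε hε => ?_⟩
    obtain ⟨u, hu, v, hv, hne⟩ := ht2 ε hε
    refine ⟨u, hu, v, hv, ?_⟩
    rwa [restrict_f_of_lt a hs (lt_of_le_of_lt hu.2 hts),
      restrict_f_of_lt a hs (lt_of_le_of_lt hv.2 hts)]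

theorem comp_restrict_le {a : UTree C z} {α : Ordinal} (ha : comp a ≤ α) {s : ℝ}
    (hs : s ≤ a.ρ) : comp (a.restrict s hs) ≤ α := by
  rw [comp_le_iff] at ha ⊢
  have hsub : Pset (a.restrict s hs) ⊆ Pset a := by
    rw [Pset, Pset, badSet_restrict]
    exact closure_mono inter_subset_left
  have h1 := cbDeriv_mono hsub α
  rw [ha] at h1
  exact subset_empty_iff.mp h1

theorem extend_rho (a : UTree C z) (v : C) : (a.extend v).ρ = a.ρ + 1 := rfl

theorem extend_f_lt (a : UTree C z) (v : C) {t : ℝ} (h : t < a.ρ) :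
    (a.extend v).f t = a.f t := if_pos h

theorem extend_f_rho (a : UTree C z) (v : C) : (a.extend v).f a.ρ = v := by
  show (if a.ρ < a.ρ then a.f a.ρ else if a.ρ < a.ρ + 1 then v else z) = v
  rw [if_neg (lt_irrefl _), if_pos (by linarith)]

theorem wedgeρ_extend (a : UTree C z) (v : C) : wedgeρ (a.extend v) a = a.ρ := by
  apply le_antisymm (wedgeρ_le_rho_right _ _)
  exact le_wedgeρ ⟨le_min (by rw [extend_rho]; linarith) le_rfl,
    fun u hu => extend_f_lt a v hu⟩

theorem badSet_extend_subset (a : UTree C z) (v : C) :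
    badSet (a.extend v) ⊆ badSet a ∪ {a.ρ} := by
  rintro t ⟨ht1, ht2⟩
  have ht1' : t < a.ρ + 1 := ht1
  rcases lt_trichotomy t a.ρ with h | h | h
  · left
    refine ⟨h, fun ε hε => ?_⟩
    obtain ⟨u, hu, v', hv', hne⟩ := ht2 ε hε
    refine ⟨u, hu, v', hv', ?_⟩
    rwa [extend_f_lt a v (lt_of_le_of_lt hu.2 h), extend_f_lt a v (lt_of_le_of_lt hv'.2 h)] at hne
  · exact Or.inr (by simp [h])
  · exfalso
    obtain ⟨u, hu, v', hv', hne⟩ := ht2 (t - a.ρ) (by linarith)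
    have he : ∀ w, t - (t - a.ρ) ≤ w → w ≤ t → (a.extend v).f w = v := by
      intro w hw1 hw2
      show (if w < a.ρ then a.f w else if w < a.ρ + 1 then v else z) = v
      rw [if_neg (not_lt.mpr (by linarith)), if_pos (by linarith)]
    exact hne ((he u hu.1 hu.2).trans (he v' hv'.1 hv'.2).symm)

theorem comp_extend_le {a : UTree C z} {α : Ordinal} (hα : 1 ≤ α) (ha : comp a ≤ α) (v : C) :
    comp (a.extend v) ≤ α := by
  rw [comp_le_iff] at ha ⊢
  have hsub : Pset (a.extend v) ⊆ Pset a ∪ {a.ρ} := by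
    rw [Pset]
    refine (closure_mono (badSet_extend_subset a v)).trans ?_
    rw [closure_union, closure_singleton]
    exact subset_rfl
  have h1 := cbDeriv_mono hsub α
  rw [cbDeriv_union_singleton (Pset_isClosed a) a.ρ hα, ha] at h1
  exact subset_empty_iff.mp h1

theorem cconst_rho (ℓ : ℝ) : (cconst ℓ : UTree C z).ρ = ℓ := rfl

theorem restrict_cconst {ℓ u : ℝ} (h : u ≤ ℓ) :
    (cconst ℓ : UTree C z).restrict u h = cconst u := by
  refine ext' rfl (funext fun t => ?_)
  show (if t < u then z else z) = z
  split_ifs <;> rfl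

theorem restrict_eq_cconst {a : UTree C z} {s₀ : ℝ} (h0 : ∀ t, t < s₀ → a.f t = z)
    {u : ℝ} (hu : u ≤ s₀) (hu' : u ≤ a.ρ) : a.restrict u hu' = cconst u := by
  refine ext' rfl (funext fun t => ?_)
  show (if t < u then a.f t else z) = z
  split_ifs with h
  · exact h0 t (lt_of_lt_of_le h hu)
  · rfl

end UTree



namespace UTree
variable {C : Type} {z : C}

def Between (a q b : UTree C z) : Prop :=
  q.ρ + wedgeρ a b = wedgeρ a q + wedgeρ q b

theorem between_iff_dist (a q b : UTree C z) :
    dist a q + dist q b = dist a b ↔ Between a q b := by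
  rw [dist_def, dist_def, dist_def, Between]
  constructor <;> intro h <;> linarith

theorem geoPt_arg_nonneg (a b : UTree C z) (u : ℝ) : 0 ≤ max 0 (min u (dist a b)) :=
  le_max_left 0 _

theorem geoPt_arg_le (a b : UTree C z) (u : ℝ) : max 0 (min u (dist a b)) ≤ dist a b :=
  max_le dist_nonneg (min_le_right _ _)

/-- The point at parameter `u` along the geodesic from `a` to `b` (with the parameter
clamped into `[0, dist a b]`). -/
def geoPt (a b : UTree C z) (u : ℝ) : UTree C z :=
  if max 0 (min u (dist a b)) ≤ a.ρ - wedgeρ a b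
  then a.restrict (a.ρ - max 0 (min u (dist a b)))
    (sub_le_self _ (geoPt_arg_nonneg a b u))
  else b.restrict (max 0 (min u (dist a b)) + 2 * wedgeρ a b - a.ρ)
    (by have h1 := geoPt_arg_le a b u; have h2 := dist_def a b; linarith)

theorem comp_geoPt {a b : UTree C z} {α : Ordinal} (ha : comp a ≤ α) (hb : comp b ≤ α)
    (u : ℝ) : comp (geoPt a b u) ≤ α := by
  simp only [geoPt]
  split_ifs
  · exact comp_restrict_le ha _
  · exact comp_restrict_le hb _

theorem exists_geodesic {α : Ordinal} (x y : ↥(level z α)) :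
    ∃ γ : ℝ → ↥(level z α), γ 0 = x ∧ γ (dist x y) = y ∧
      ∀ s ∈ Icc (0:ℝ) (dist x y), ∀ t ∈ Icc (0:ℝ) (dist x y),
        dist (γ s) (γ t) = |s - t| := by
  obtain ⟨a, ha⟩ := x
  obtain ⟨b, hb⟩ := y
  have ha' : comp a ≤ α := ha
  have hb' : comp b ≤ α := hb
  have hwa : wedgeρ a b ≤ a.ρ := wedgeρ_le_rho_left a b
  have hwb : wedgeρ a b ≤ b.ρ := wedgeρ_le_rho_right a b
  have hdd : dist a b = a.ρ + b.ρ - 2 * wedgeρ a b := dist_def a b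
  have hD0 : (0:ℝ) ≤ dist a b := dist_nonneg
  have hdxy : dist (⟨a, ha⟩ : ↥(level z α)) ⟨b, hb⟩ = dist a b := Subtype.dist_eq _ _
  have hclamp : ∀ u, 0 ≤ u → u ≤ dist a b → max 0 (min u (dist a b)) = u := by
    intro u h1 h2
    rw [min_eq_left h2, max_eq_right h1]
  refine ⟨fun u => ⟨geoPt a b u, comp_geoPt ha' hb' u⟩, ?_, ?_, ?_⟩
  · apply Subtype.ext
    show geoPt a b 0 = a
    have h0 : max 0 (min 0 (dist a b)) = 0 := hclamp 0 le_rfl hD0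
    rw [geoPt, if_pos (by rw [h0]; linarith)]
    rw [restrict_congr a (show a.ρ - max 0 (min 0 (dist a b)) = a.ρ by rw [h0]; ring)]
    exact restrict_self a _
  · apply Subtype.ext
    rw [hdxy]
    show geoPt a b (dist a b) = b
    have h0 : max 0 (min (dist a b) (dist a b)) = dist a b := hclamp _ hD0 le_rfl
    by_cases hcase : dist a b ≤ a.ρ - wedgeρ a b
    · rw [geoPt, if_pos (by rw [h0]; exact hcase)]
      have hρb : b.ρ = wedgeρ a b := le_antisymm (by linarith) hwb
      rw [restrict_congr a
        (show a.ρ - max 0 (min (dist a b) (dist a b)) = b.ρ by rw [h0, hdd, hρb]; ring)]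
      exact restrict_eq_right a b hρb.symm _
    · rw [geoPt, if_neg (by rw [h0]; exact hcase)]
      rw [restrict_congr b
        (show max 0 (min (dist a b) (dist a b)) + 2 * wedgeρ a b - a.ρ = b.ρ by
          rw [h0, hdd]; ring)]
      exact restrict_self b _
  · intro s hs t ht
    rw [hdxy] at hs ht
    rw [Subtype.dist_eq]
    show dist (geoPt a b s) (geoPt a b t) = |s - t|
    have hcs : max 0 (min s (dist a b)) = s := hclamp s hs.1 hs.2
    have hct : max 0 (min t (dist a b)) = t := hclamp t ht.1 ht.2
    simp only [geoPt]
    by_cases h1 : max 0 (min s (dist a b)) ≤ a.ρ - wedgeρ a b <;>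
      by_cases h2 : max 0 (min t (dist a b)) ≤ a.ρ - wedgeρ a b
    · rw [if_pos h1, if_pos h2, dist_restrict_restrict_self, hcs, hct]
      have he : (a.ρ - s) - (a.ρ - t) = t - s := by ring
      rw [he, abs_sub_comm]
    · rw [if_pos h1, if_neg h2, dist_restrict_restrict, hcs, hct]
      rw [hcs] at h1; rw [hct] at h2
      push_neg at h2
      have hmin : min (min (a.ρ - s) (t + 2 * wedgeρ a b - a.ρ)) (wedgeρ a b) = wedgeρ a b :=
        min_eq_right (le_min (by linarith) (by linarith))
      rw [hmin, abs_of_nonpos (by linarith)]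
      ring
    · rw [if_neg h1, if_pos h2, dist_restrict_restrict, hcs, hct]
      rw [hcs] at h1; rw [hct] at h2
      push_neg at h1
      have hmin : min (min (s + 2 * wedgeρ a b - a.ρ) (a.ρ - t)) (wedgeρ a b) = wedgeρ a b :=
        min_eq_right (le_min (by linarith) (by linarith))
      rw [wedgeρ_comm b a, hmin, abs_of_nonneg (by linarith)]
      ring
    · rw [if_neg h1, if_neg h2, dist_restrict_restrict_self, hcs, hct]
      have he : (s + 2 * wedgeρ a b - a.ρ) - (t + 2 * wedgeρ a b - a.ρ) = s - t := by ring
      rw [he]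

end UTree



namespace UTree
variable {C : Type} {z : C}

theorem Between.symm {a b q : UTree C z} (h : Between a q b) : Between b q a := by
  unfold Between at h ⊢
  rw [wedgeρ_comm b a, wedgeρ_comm b q, wedgeρ_comm q a]
  linarith

theorem dirOpt_ne_of_between_aux {a b q : UTree C z} (hB : Between a q b) (hqa : a ≠ q)
    (hqb : b ≠ q) (hle : wedgeρ a q ≤ wedgeρ q b) : dirOpt q a ≠ dirOpt q b := by
  have h1 : wedgeρ a q ≤ q.ρ := wedgeρ_le_rho_right a q
  have h2 : wedgeρ q b ≤ q.ρ := wedgeρ_le_rho_left q b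
  have h3 := min_wedgeρ_le a q b
  rw [min_eq_left hle] at h3
  have hBe : q.ρ + wedgeρ a b = wedgeρ a q + wedgeρ q b := hB
  have e1 : q.ρ = wedgeρ q b := by linarith
  have e2 : wedgeρ a b = wedgeρ a q := by linarith
  have hnb : ¬ wedgeρ b q < q.ρ := by rw [wedgeρ_comm b q]; linarith
  have hρb : q.ρ < b.ρ := rho_lt_of_not_lt hnb hqb
  rw [dirOpt, dirOpt, if_neg hnb]
  by_cases hsub : wedgeρ a q < q.ρ
  · rw [if_pos hsub]
    simp
  · rw [if_neg hsub]
    have hwa : wedgeρ a q = q.ρ := le_antisymm h1 (not_lt.mp hsub)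
    have hρa : q.ρ < a.ρ := rho_lt_of_not_lt hsub hqa
    intro hlabel
    have hlab : a.f q.ρ = b.f q.ρ := Option.some_injective _ hlabel
    have hagree : ∀ u, u < q.ρ → a.f u = b.f u := by
      intro u hu
      have g1 : a.f u = q.f u := agree_of_lt_wedgeρ a q (hwa ▸ hu)
      have g2 : q.f u = b.f u := agree_of_lt_wedgeρ q b (e1 ▸ hu)
      exact g1.trans g2
    have hgt := lt_wedgeρ_of_agree hρa hρb hagree hlab
    rw [e2, hwa] at hgt
    exact lt_irrefl _ hgt

theorem dirOpt_ne_of_between {a b q : UTree C z} (hB : Between a q b) (hqa : a ≠ q)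
    (hqb : b ≠ q) : dirOpt q a ≠ dirOpt q b := by
  rcases le_total (wedgeρ a q) (wedgeρ q b) with h | h
  · exact dirOpt_ne_of_between_aux hB hqa hqb h
  · refine (dirOpt_ne_of_between_aux hB.symm hqb hqa ?_).symm
    rwa [wedgeρ_comm b q, wedgeρ_comm q a]

theorem median_caseB {a b p : UTree C z} (hp : ¬ Between a p b)
    (hgt : wedgeρ a b < wedgeρ a p) :
    ∃ c : UTree C z, Between a c b ∧ p ≠ c ∧
      (a ≠ c → dirOpt c a ≠ dirOpt c p) ∧ (b ≠ c → dirOpt c b ≠ dirOpt c p) := by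
  have hwap : wedgeρ a p ≤ a.ρ := wedgeρ_le_rho_left a p
  set c := a.restrict (wedgeρ a p) hwap with hc
  have hρc : c.ρ = wedgeρ a p := rfl
  have wac : wedgeρ a c = wedgeρ a p := by
    rw [hc, wedgeρ_restrict_right a a, wedgeρ_self, min_eq_left hwap]
  have wpc : wedgeρ p c = wedgeρ a p := by
    rw [hc, wedgeρ_restrict_right p a, wedgeρ_comm p a, min_self]
  have wbc : wedgeρ b c = wedgeρ a b := by
    rw [hc, wedgeρ_restrict_right b a, wedgeρ_comm b a, min_eq_right hgt.le]
  have hB : Between a c b := by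
    unfold Between
    rw [hρc, wac, wedgeρ_comm c b, wbc]
  have hpc : p ≠ c := fun h => hp (h ▸ hB)
  have hnpc : ¬ wedgeρ p c < c.ρ := by rw [wpc, hρc]; exact lt_irrefl _
  have hρp : c.ρ < p.ρ := rho_lt_of_not_lt hnpc hpc
  refine ⟨c, hB, hpc, ?_, ?_⟩
  · intro hac hlabel
    rw [dirOpt, dirOpt, if_neg (by rw [wac, hρc]; exact lt_irrefl _),
      if_neg hnpc] at hlabel
    have hlab : a.f c.ρ = p.f c.ρ := Option.some_injective _ hlabel
    have hρa : c.ρ < a.ρ := rho_lt_of_not_lt (by rw [wac, hρc]; exact lt_irrefl _) hac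
    have hagree : ∀ u, u < c.ρ → a.f u = p.f u := fun u hu =>
      agree_of_lt_wedgeρ a p (hρc ▸ hu)
    have hgt2 := lt_wedgeρ_of_agree hρa hρp hagree hlab
    rw [hρc] at hgt2
    exact lt_irrefl _ hgt2
  · intro _
    rw [dirOpt, dirOpt, if_pos (by rw [wbc, hρc]; exact hgt), if_neg hnpc]
    simp

theorem median_caseA {a b p : UTree C z} (hp : ¬ Between a p b)
    (h1 : wedgeρ a p ≤ wedgeρ a b) (h2 : wedgeρ b p ≤ wedgeρ a b) :
    ∃ c : UTree C z, Between a c b ∧ p ≠ c ∧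
      (a ≠ c → dirOpt c a ≠ dirOpt c p) ∧ (b ≠ c → dirOpt c b ≠ dirOpt c p) := by
  have hwab : wedgeρ a b ≤ a.ρ := wedgeρ_le_rho_left a b
  set c := a.restrict (wedgeρ a b) hwab with hc
  have hρc : c.ρ = wedgeρ a b := rfl
  have wac : wedgeρ a c = wedgeρ a b := by
    rw [hc, wedgeρ_restrict_right a a, wedgeρ_self, min_eq_left hwab]
  have wbc : wedgeρ b c = wedgeρ a b := by
    rw [hc, wedgeρ_restrict_right b a, wedgeρ_comm b a, min_self]
  have wpc : wedgeρ p c = wedgeρ a p := by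
    rw [hc, wedgeρ_restrict_right p a, wedgeρ_comm p a, min_eq_right h1]
  have hB : Between a c b := by
    unfold Between
    rw [hρc, wac, wedgeρ_comm c b, wbc]
  have hpc : p ≠ c := fun h => hp (h ▸ hB)
  refine ⟨c, hB, hpc, ?_, ?_⟩
  · intro hac hlabel
    by_cases hsub : wedgeρ a p < wedgeρ a b
    · rw [dirOpt, dirOpt, if_neg (by rw [wac, hρc]; exact lt_irrefl _),
        if_pos (by rw [wpc, hρc]; exact hsub)] at hlabel
      exact nomatch hlabel
    · have hwap : wedgeρ a p = wedgeρ a b := le_antisymm h1 (not_lt.mp hsub)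
      have hnpc : ¬ wedgeρ p c < c.ρ := by rw [wpc, hρc, hwap]; exact lt_irrefl _
      rw [dirOpt, dirOpt, if_neg (by rw [wac, hρc]; exact lt_irrefl _),
        if_neg hnpc] at hlabel
      have hlab : a.f c.ρ = p.f c.ρ := Option.some_injective _ hlabel
      have hρa : c.ρ < a.ρ := rho_lt_of_not_lt (by rw [wac, hρc]; exact lt_irrefl _) hac
      have hρp : c.ρ < p.ρ := rho_lt_of_not_lt hnpc hpc
      have hagree : ∀ u, u < c.ρ → a.f u = p.f u := fun u hu =>
        agree_of_lt_wedgeρ a p (by rw [hρc, ← hwap] at hu; exact hu)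
      have hgt2 := lt_wedgeρ_of_agree hρa hρp hagree hlab
      rw [hρc, ← hwap] at hgt2
      exact lt_irrefl _ hgt2
  · intro hbc hlabel
    by_cases hsub : wedgeρ a p < wedgeρ a b
    · rw [dirOpt, dirOpt, if_neg (by rw [wbc, hρc]; exact lt_irrefl _),
        if_pos (by rw [wpc, hρc]; exact hsub)] at hlabel
      exact nomatch hlabel
    · have hwap : wedgeρ a p = wedgeρ a b := le_antisymm h1 (not_lt.mp hsub)
      have hnpc : ¬ wedgeρ p c < c.ρ := by rw [wpc, hρc, hwap]; exact lt_irrefl _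
      rw [dirOpt, dirOpt, if_neg (by rw [wbc, hρc]; exact lt_irrefl _),
        if_neg hnpc] at hlabel
      have hlab : b.f c.ρ = p.f c.ρ := Option.some_injective _ hlabel
      have hρb : c.ρ < b.ρ := rho_lt_of_not_lt (by rw [wbc, hρc]; exact lt_irrefl _) hbc
      have hρp : c.ρ < p.ρ := rho_lt_of_not_lt hnpc hpc
      have hagree : ∀ u, u < c.ρ → b.f u = p.f u := by
        intro u hu
        have g1 : b.f u = a.f u := (agree_of_lt_wedgeρ a b (hρc ▸ hu)).symm
        have g2 : a.f u = p.f u :=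
          agree_of_lt_wedgeρ a p (by rw [hρc, ← hwap] at hu; exact hu)
        exact g1.trans g2
      have hgt2 := lt_wedgeρ_of_agree hρb hρp hagree hlab
      rw [hρc] at hgt2
      linarith
  
theorem exists_median {a b p : UTree C z} (hp : ¬ Between a p b) :
    ∃ c : UTree C z, Between a c b ∧ p ≠ c ∧
      (a ≠ c → dirOpt c a ≠ dirOpt c p) ∧ (b ≠ c → dirOpt c b ≠ dirOpt c p) := by
  by_cases hA : wedgeρ a p ≤ wedgeρ a b ∧ wedgeρ b p ≤ wedgeρ a b
  · exact median_caseA hp hA.1 hA.2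
  · push_neg at hA
    by_cases h1 : wedgeρ a p ≤ wedgeρ a b
    · have h2 : wedgeρ a b < wedgeρ b p := hA h1
      have hp' : ¬ Between b p a := fun h => hp h.symm
      obtain ⟨c, hB, hpc, hdb, hda⟩ := median_caseB hp'
        (by rw [wedgeρ_comm b a]; exact h2)
      exact ⟨c, hB.symm, hpc, hda, hdb⟩
    · exact median_caseB hp (not_le.mp h1)

end UTree



namespace UTree
variable {C : Type} {z : C}

theorem hit_left {α : Ordinal} {x y : ↥(level z α)} (γ : Path x y) (t₀ : unitInterval)
    {c : UTree C z}
    (h : dirOpt c (x : UTree C z) ≠ dirOpt c ((γ t₀ : ↥(level z α)) : UTree C z)) :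
    ∃ t, t ≤ t₀ ∧ ((γ t : ↥(level z α)) : UTree C z) = c := by
  set f : unitInterval → UTree C z := fun s =>
    ((γ ⟨min s.1 t₀.1, ⟨le_min s.2.1 t₀.2.1, (min_le_left _ _).trans s.2.2⟩⟩ :
      ↥(level z α)) : UTree C z) with hf
  have hcont : Continuous f := by
    apply continuous_subtype_val.comp
    exact γ.continuous.comp (Continuous.subtype_mk
      (continuous_subtype_val.min continuous_const) _)
  have h0 : f 0 = (x : UTree C z) := by
    have e : (⟨min ((0:unitInterval):ℝ) t₀.1, ⟨le_min (0:unitInterval).2.1 t₀.2.1,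
        (min_le_left _ _).trans (0:unitInterval).2.2⟩⟩ : unitInterval) = 0 :=
      Subtype.ext (by simp [t₀.2.1])
    show ((γ ⟨min ((0:unitInterval):ℝ) t₀.1, ⟨le_min (0:unitInterval).2.1 t₀.2.1,
        (min_le_left _ _).trans (0:unitInterval).2.2⟩⟩ : ↥(level z α)) : UTree C z) = _
    rw [e, γ.source]
  have h1 : f 1 = ((γ t₀ : ↥(level z α)) : UTree C z) := by
    have e : (⟨min ((1:unitInterval):ℝ) t₀.1, ⟨le_min (1:unitInterval).2.1 t₀.2.1,
        (min_le_left _ _).trans (1:unitInterval).2.2⟩⟩ : unitInterval) = t₀ :=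
      Subtype.ext (by simp [t₀.2.2])
    show ((γ ⟨min ((1:unitInterval):ℝ) t₀.1, ⟨le_min (1:unitInterval).2.1 t₀.2.1,
        (min_le_left _ _).trans (1:unitInterval).2.2⟩⟩ : ↥(level z α)) : UTree C z) = _
    rw [e]
  obtain ⟨s, hs⟩ := exists_eq_of_dirOpt_ne hcont (0 : unitInterval) 1 (by rw [h0, h1]; exact h)
  exact ⟨⟨min s.1 t₀.1, ⟨le_min s.2.1 t₀.2.1, (min_le_left _ _).trans s.2.2⟩⟩,
    Subtype.mk_le_mk.mpr (min_le_right _ _), hs⟩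

theorem hit_right {α : Ordinal} {x y : ↥(level z α)} (γ : Path x y) (t₀ : unitInterval)
    {c : UTree C z}
    (h : dirOpt c ((γ t₀ : ↥(level z α)) : UTree C z) ≠ dirOpt c (y : UTree C z)) :
    ∃ t, t₀ ≤ t ∧ ((γ t : ↥(level z α)) : UTree C z) = c := by
  set f : unitInterval → UTree C z := fun s =>
    ((γ ⟨max s.1 t₀.1, ⟨le_max_of_le_right t₀.2.1, max_le s.2.2 t₀.2.2⟩⟩ :
      ↥(level z α)) : UTree C z) with hf
  have hcont : Continuous f := by
    apply continuous_subtype_val.comp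
    exact γ.continuous.comp (Continuous.subtype_mk
      (continuous_subtype_val.max continuous_const) _)
  have h0 : f 0 = ((γ t₀ : ↥(level z α)) : UTree C z) := by
    have e : (⟨max ((0:unitInterval):ℝ) t₀.1, ⟨le_max_of_le_right t₀.2.1,
        max_le (0:unitInterval).2.2 t₀.2.2⟩⟩ : unitInterval) = t₀ :=
      Subtype.ext (by simp [t₀.2.1])
    show ((γ ⟨max ((0:unitInterval):ℝ) t₀.1, ⟨le_max_of_le_right t₀.2.1,
        max_le (0:unitInterval).2.2 t₀.2.2⟩⟩ : ↥(level z α)) : UTree C z) = _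
    rw [e]
  have h1 : f 1 = (y : UTree C z) := by
    have e : (⟨max ((1:unitInterval):ℝ) t₀.1, ⟨le_max_of_le_right t₀.2.1,
        max_le (1:unitInterval).2.2 t₀.2.2⟩⟩ : unitInterval) = 1 :=
      Subtype.ext (by simp [t₀.2.2])
    show ((γ ⟨max ((1:unitInterval):ℝ) t₀.1, ⟨le_max_of_le_right t₀.2.1,
        max_le (1:unitInterval).2.2 t₀.2.2⟩⟩ : ↥(level z α)) : UTree C z) = _
    rw [e, γ.target]
  obtain ⟨s, hs⟩ := exists_eq_of_dirOpt_ne hcont (0 : unitInterval) 1 (by rw [h0, h1]; exact h)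
  exact ⟨⟨max s.1 t₀.1, ⟨le_max_of_le_right t₀.2.1, max_le s.2.2 t₀.2.2⟩⟩,
    Subtype.mk_le_mk.mpr (le_max_right _ _), hs⟩

theorem range_injective_path {α : Ordinal} {x y : ↥(level z α)} (hxy : x ≠ y)
    (γ : Path x y) (hinj : Function.Injective γ) :
    range γ = {q : ↥(level z α) | dist x q + dist q y = dist x y} := by
  apply Set.eq_of_subset_of_subset
  · rintro _ ⟨t₀, rfl⟩
    show dist x (γ t₀) + dist (γ t₀) y = dist x y
    rw [Subtype.dist_eq, Subtype.dist_eq, Subtype.dist_eq, between_iff_dist]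
    by_contra hp
    obtain ⟨cv, hB, hpc, hda, hdb⟩ := exists_median hp
    by_cases hxc : (x : UTree C z) = cv
    · have hyc : (y : UTree C z) ≠ cv := fun h => hxy (Subtype.ext (hxc.trans h.symm))
      obtain ⟨t₂, ht₂, hval⟩ := hit_right γ t₀ (hdb hyc).symm
      have h1 : γ t₂ = x := Subtype.ext (hval.trans hxc.symm)
      have h2 : t₂ = 0 := hinj (h1.trans γ.source.symm)
      have hne : t₂ ≠ t₀ := fun h => hpc (by rw [← h]; exact hval)
      apply hne
      rw [h2]
      exact le_antisymm unitInterval.nonneg' (h2 ▸ ht₂)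
    · by_cases hyc : (y : UTree C z) = cv
      · obtain ⟨t₁, ht₁, hval⟩ := hit_left γ t₀ (hda hxc)
        have h1 : γ t₁ = y := Subtype.ext (hval.trans hyc.symm)
        have h2 : t₁ = 1 := hinj (h1.trans γ.target.symm)
        have hne : t₁ ≠ t₀ := fun h => hpc (by rw [← h]; exact hval)
        apply hne
        rw [h2]
        exact le_antisymm (h2 ▸ ht₁) unitInterval.le_one'
      · obtain ⟨t₁, ht₁, hv₁⟩ := hit_left γ t₀ (hda hxc)
        obtain ⟨t₂, ht₂, hv₂⟩ := hit_right γ t₀ (hdb hyc).symm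
        have h12 : t₁ = t₂ := hinj (Subtype.ext (hv₁.trans hv₂.symm))
        have hne₁ : t₁ ≠ t₀ := fun h => hpc (h ▸ hv₁)
        exact hne₁ (le_antisymm ht₁ (h12 ▸ ht₂))
  · intro q hq
    have hB : Between (x : UTree C z) (q : UTree C z) (y : UTree C z) := by
      rw [← between_iff_dist, ← Subtype.dist_eq, ← Subtype.dist_eq, ← Subtype.dist_eq]
      exact hq
    by_cases hqx : q = x
    · exact ⟨0, by rw [γ.source, hqx]⟩
    by_cases hqy : q = y
    · exact ⟨1, by rw [γ.target, hqy]⟩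
    have hne : dirOpt (q : UTree C z) (x : UTree C z) ≠ dirOpt (q : UTree C z) (y : UTree C z) :=
      dirOpt_ne_of_between hB (fun h => hqx (Subtype.ext h).symm)
        (fun h => hqy (Subtype.ext h).symm)
    obtain ⟨t, -, hv⟩ := hit_right γ 0 (c := (q : UTree C z))
      (by rw [show ((γ 0 : ↥(level z α)) : UTree C z) = (x : UTree C z) by rw [γ.source]]
          exact hne)
    exact ⟨t, Subtype.ext hv⟩

theorem arcs_unique {α : Ordinal} (x y : ↥(level z α)) (γ₁ γ₂ : Path x y)
    (h₁ : Function.Injective γ₁) (h₂ : Function.Injective γ₂) :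
    range γ₁ = range γ₂ := by
  by_cases hxy : x = y
  · exfalso
    subst hxy
    have h01 : γ₁ 0 = γ₁ 1 := by rw [γ₁.source, γ₁.target]
    have := h₁ h01
    have hc : ((0 : unitInterval) : ℝ) = ((1 : unitInterval) : ℝ) := congrArg Subtype.val this
    norm_num at hc
  · rw [range_injective_path hxy γ₁ h₁, range_injective_path hxy γ₂ h₂]

end UTree



namespace UTree
variable {C : Type} {z : C}

theorem lipschitz_restrict (a : UTree C z) :
    LipschitzWith 1 (fun u : ℝ => a.restrict (min u a.ρ) (min_le_right u a.ρ)) := by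
  apply LipschitzWith.of_dist_le_mul
  intro u v
  rw [dist_restrict_restrict_self, NNReal.coe_one, one_mul, Real.dist_eq]
  have h1 := le_abs_self (u - v)
  have h2 := neg_abs_le (u - v)
  have h3 := abs_nonneg (u - v)
  rcases min_cases u a.ρ with ⟨e1, l1⟩ | ⟨e1, l1⟩ <;>
    rcases min_cases v a.ρ with ⟨e2, l2⟩ | ⟨e2, l2⟩ <;> rw [e1, e2] <;>
    apply abs_le.mpr <;> constructor <;> linarith

theorem ne_of_rho_gt {q c : UTree C z} (h : c.ρ < q.ρ) : q ≠ c := fun he => by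
  rw [he] at h; exact lt_irrefl _ h

theorem ne_of_wedge_lt {q c : UTree C z} (h : wedgeρ q c < c.ρ) : q ≠ c := fun he => by
  rw [he, wedgeρ_self] at h; exact lt_irrefl _ h

theorem dirOpt_eq_none_iff {c q : UTree C z} : dirOpt c q = none ↔ wedgeρ q c < c.ρ := by
  unfold dirOpt
  split_ifs with h <;> simp [h]

theorem dirOpt_eq_some_iff {c q : UTree C z} {v : C} :
    dirOpt c q = some v ↔ ¬ wedgeρ q c < c.ρ ∧ q.f c.ρ = v := by
  unfold dirOpt
  split_ifs with h <;> simp [h]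

theorem joinedIn_restrict {α : Ordinal} {P : UTree C z → Prop} {a : UTree C z}
    (ha : comp a ≤ α) {s s' : ℝ} (hs : s ≤ a.ρ) (hs' : s' ≤ a.ρ)
    (hP : ∀ u (hu : u ≤ a.ρ), min s s' ≤ u → u ≤ max s s' → P (a.restrict u hu)) :
    JoinedIn {q : ↥(level z α) | P (q : UTree C z)}
      ⟨a.restrict s hs, comp_restrict_le ha hs⟩ ⟨a.restrict s' hs', comp_restrict_le ha hs'⟩ := by
  have hσ : Continuous (fun t : unitInterval => s + (t : ℝ) * (s' - s)) := by
    exact continuous_const.add (continuous_subtype_val.mul continuous_const)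
  have hbound : ∀ t : unitInterval, min s s' ≤ s + (t : ℝ) * (s' - s) ∧
      s + (t : ℝ) * (s' - s) ≤ max s s' := by
    intro t
    have ht0 : (0:ℝ) ≤ t := t.2.1
    have ht1 : (t:ℝ) ≤ 1 := t.2.2
    rcases le_total s s' with h | h
    · rw [min_eq_left h, max_eq_right h]
      constructor <;> nlinarith
    · rw [min_eq_right h, max_eq_left h]
      constructor <;> nlinarith
  have hmem : ∀ t : unitInterval, P (a.restrict (min (s + (t : ℝ) * (s' - s)) a.ρ)
      (min_le_right _ _)) := by
    intro t
    apply hP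
    · exact le_min (hbound t).1 ((min_le_left s s').trans hs)
    · exact (min_le_left _ _).trans (hbound t).2
  refine ⟨⟨⟨fun t => ⟨a.restrict (min (s + (t : ℝ) * (s' - s)) a.ρ)
      (min_le_right _ _), comp_restrict_le ha _⟩,
    Continuous.subtype_mk ((lipschitz_restrict a).continuous.comp hσ) _⟩,
    ?_, ?_⟩, fun t => hmem t⟩
  · apply Subtype.ext
    show a.restrict (min (s + ((0:unitInterval) : ℝ) * (s' - s)) a.ρ) (min_le_right _ _) =
      a.restrict s hs
    rw [restrict_congr a (show min (s + ((0:unitInterval) : ℝ) * (s' - s)) a.ρ = s by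
      norm_num [min_eq_left hs])]
  · apply Subtype.ext
    show a.restrict (min (s + ((1:unitInterval) : ℝ) * (s' - s)) a.ρ) (min_le_right _ _) =
      a.restrict s' hs'
    rw [restrict_congr a (show min (s + ((1:unitInterval) : ℝ) * (s' - s)) a.ρ = s' by
      norm_num [min_eq_left hs'])]

end UTree



namespace UTree
variable {C : Type} {z : C}

theorem isOpen_dirClassP {α : Ordinal} (c : UTree C z) (Q : Option C → Prop) :
    IsOpen {q : ↥(level z α) | (q : UTree C z) ≠ c ∧ Q (dirOpt c (q : UTree C z))} := by
  rw [Metric.isOpen_iff]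
  rintro q ⟨hq, hQ⟩
  obtain ⟨r, hr, hloc⟩ := dir_locally_const c hq
  refine ⟨r, hr, fun q' hq' => ?_⟩
  rw [Metric.mem_ball, Subtype.dist_eq, dist_comm] at hq'
  obtain ⟨h1, h2⟩ := hloc (q' : UTree C z) hq'
  refine ⟨h1, ?_⟩
  rw [h2]
  exact hQ

theorem joined_class_none {α : Ordinal} {c : UTree C z} (q : ↥(level z α))
    (hq1 : (q : UTree C z) ≠ c) (hq2 : dirOpt c (q : UTree C z) = none) :
    JoinedIn {q' : ↥(level z α) | (q' : UTree C z) ≠ c ∧ dirOpt c (q' : UTree C z) = none}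
      q ⟨cconst (c.ρ - 1), cconst_mem_level α⟩ := by
  have hw : wedgeρ (q : UTree C z) c < c.ρ := dirOpt_eq_none_iff.mp hq2
  obtain ⟨s₀, hs₀, hz⟩ := (q : UTree C z).eventually_zero
  set m := min (min (wedgeρ (q : UTree C z) c) s₀) (c.ρ - 1) with hm
  have hm1 : m ≤ wedgeρ (q : UTree C z) c := (min_le_left _ _).trans (min_le_left _ _)
  have hm2 : m ≤ s₀ := (min_le_left _ _).trans (min_le_right _ _)
  have hm3 : m ≤ c.ρ - 1 := min_le_right _ _
  have hmρ : m ≤ (q : UTree C z).ρ := hm1.trans (wedgeρ_le_rho_left _ _)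
  have hqc : comp (q : UTree C z) ≤ α := q.2
  have j1 := joinedIn_restrict (α := α)
    (P := fun w => w ≠ c ∧ dirOpt c w = none) hqc le_rfl hmρ
    (fun u hu _ _ => by
      have hh : wedgeρ ((q : UTree C z).restrict u hu) c < c.ρ := by
        rw [wedgeρ_restrict_left]
        exact lt_of_le_of_lt (min_le_right _ _) hw
      exact ⟨ne_of_wedge_lt hh, dirOpt_eq_none_iff.mpr hh⟩)
  have e1 : (⟨(q : UTree C z).restrict (q : UTree C z).ρ le_rfl,
      comp_restrict_le hqc le_rfl⟩ : ↥(level z α)) = q :=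
    Subtype.ext (restrict_self _ le_rfl)
  have e2 : (⟨(q : UTree C z).restrict m hmρ, comp_restrict_le hqc hmρ⟩ : ↥(level z α)) =
      ⟨cconst m, cconst_mem_level α⟩ :=
    Subtype.ext (restrict_eq_cconst hz hm2 hmρ)
  rw [e1, e2] at j1
  have hccomp : comp (cconst (c.ρ - 1) : UTree C z) ≤ α := by
    rw [comp_cconst]; exact zero_le
  have hm3' : m ≤ (cconst (c.ρ - 1) : UTree C z).ρ := hm3
  have j3 := joinedIn_restrict (α := α)
    (P := fun w => w ≠ c ∧ dirOpt c w = none) hccomp hm3' le_rfl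
    (fun u hu hu1 hu2 => by
      have hu2' : u ≤ c.ρ - 1 := hu2.trans (max_le hm3 (le_of_eq (cconst_rho _)))
      have hh : wedgeρ ((cconst (c.ρ - 1) : UTree C z).restrict u hu) c < c.ρ :=
        lt_of_le_of_lt (wedgeρ_le_rho_left _ _) (by rw [restrict_rho]; linarith)
      exact ⟨ne_of_wedge_lt hh, dirOpt_eq_none_iff.mpr hh⟩)
  have e3 : (⟨(cconst (c.ρ - 1) : UTree C z).restrict m hm3',
      comp_restrict_le hccomp hm3'⟩ : ↥(level z α)) = ⟨cconst m, cconst_mem_level α⟩ :=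
    Subtype.ext (restrict_cconst hm3)
  have e4 : (⟨(cconst (c.ρ - 1) : UTree C z).restrict (cconst (c.ρ - 1) : UTree C z).ρ le_rfl,
      comp_restrict_le hccomp le_rfl⟩ : ↥(level z α)) =
      ⟨cconst (c.ρ - 1), cconst_mem_level α⟩ :=
    Subtype.ext (restrict_self _ le_rfl)
  rw [e3, e4] at j3
  exact j1.trans j3

theorem joined_class_some {α : Ordinal} (hα : 1 ≤ α) {c : UTree C z} (hc : comp c ≤ α)
    (v : C) (q : ↥(level z α))
    (hq1 : (q : UTree C z) ≠ c) (hq2 : dirOpt c (q : UTree C z) = some v) :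
    JoinedIn {q' : ↥(level z α) | (q' : UTree C z) ≠ c ∧ dirOpt c (q' : UTree C z) = some v}
      q ⟨extend c v, comp_extend_le hα hc v⟩ := by
  obtain ⟨hnlt, hlab⟩ := dirOpt_eq_some_iff.mp hq2
  have hwqc : wedgeρ (q : UTree C z) c = c.ρ := wedgeρ_eq_of_not_lt hnlt
  have hρq : c.ρ < (q : UTree C z).ρ := rho_lt_of_not_lt hnlt hq1
  have hρb : c.ρ < (extend c v).ρ := by rw [extend_rho]; linarith
  have hw₁ : c.ρ < wedgeρ (q : UTree C z) (extend c v) := by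
    apply lt_wedgeρ_of_agree hρq hρb
    · intro u hu
      have g1 : (q : UTree C z).f u = c.f u := agree_of_lt_wedgeρ _ c (hwqc ▸ hu)
      have g2 : (extend c v).f u = c.f u :=
        agree_of_lt_wedgeρ _ c (by rw [wedgeρ_extend]; exact hu)
      exact g1.trans g2.symm
    · exact hlab.trans (extend_f_rho c v).symm
  have hwle_q : wedgeρ (q : UTree C z) (extend c v) ≤ (q : UTree C z).ρ :=
    wedgeρ_le_rho_left _ _
  have hwle_b : wedgeρ (q : UTree C z) (extend c v) ≤ (extend c v).ρ :=
    wedgeρ_le_rho_right _ _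
  have hqc : comp (q : UTree C z) ≤ α := q.2
  have hbcomp : comp (extend c v) ≤ α := comp_extend_le hα hc v
  have hclass : ∀ (a : UTree C z), wedgeρ a c = c.ρ → a.f c.ρ = v →
      ∀ u (hu : u ≤ a.ρ), wedgeρ (q : UTree C z) (extend c v) ≤ u →
      ((a.restrict u hu : UTree C z) ≠ c ∧ dirOpt c (a.restrict u hu) = some v) := by
    intro a hwac hafv u hu hu1
    have hucρ : c.ρ < u := lt_of_lt_of_le hw₁ hu1
    have hh : wedgeρ (a.restrict u hu) c = c.ρ := by
      rw [wedgeρ_restrict_left, hwac, min_eq_right hucρ.le]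
    refine ⟨ne_of_rho_gt (by rw [restrict_rho]; exact hucρ), ?_⟩
    refine dirOpt_eq_some_iff.mpr ⟨by rw [hh]; exact lt_irrefl _, ?_⟩
    rw [restrict_f_of_lt a hu hucρ]
    exact hafv
  have j1 := joinedIn_restrict (α := α)
    (P := fun w => w ≠ c ∧ dirOpt c w = some v) hqc le_rfl hwle_q
    (fun u hu hu1 _ => by
      rw [min_eq_right hwle_q] at hu1
      exact hclass (q : UTree C z) hwqc hlab u hu hu1)
  have j2 := joinedIn_restrict (α := α)
    (P := fun w => w ≠ c ∧ dirOpt c w = some v) hbcomp hwle_b le_rfl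
    (fun u hu hu1 _ => by
      rw [min_eq_left hwle_b] at hu1
      exact hclass (extend c v) (wedgeρ_extend c v) (extend_f_rho c v) u hu hu1)
  have e1 : (⟨(q : UTree C z).restrict (q : UTree C z).ρ le_rfl,
      comp_restrict_le hqc le_rfl⟩ : ↥(level z α)) = q :=
    Subtype.ext (restrict_self _ le_rfl)
  have emid : (⟨(q : UTree C z).restrict (wedgeρ (q : UTree C z) (extend c v)) hwle_q,
      comp_restrict_le hqc hwle_q⟩ : ↥(level z α)) =
      ⟨(extend c v).restrict (wedgeρ (q : UTree C z) (extend c v)) hwle_b,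
      comp_restrict_le hbcomp hwle_b⟩ :=
    Subtype.ext (restrict_eq_restrict_of_le_wedgeρ _ _ le_rfl hwle_q hwle_b)
  have e4 : (⟨(extend c v).restrict (extend c v).ρ le_rfl,
      comp_restrict_le hbcomp le_rfl⟩ : ↥(level z α)) =
      ⟨extend c v, comp_extend_le hα hc v⟩ :=
    Subtype.ext (restrict_self _ le_rfl)
  rw [e1, emid] at j1
  rw [e4] at j2
  exact j1.trans j2

theorem subset_of_clopen_aux {X : Type*} [TopologicalSpace X] {T D O : Set X}
    (hT : IsPreconnected T) (hD : IsOpen D) (hO : IsOpen O)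
    (hdisj : ∀ p, p ∈ D → p ∈ O → False) (hcover : T ⊆ D ∪ O)
    (hne : (T ∩ D).Nonempty) : T ⊆ D := by
  intro t ht
  by_contra htD
  have htO : t ∈ O := (hcover ht).resolve_left htD
  obtain ⟨p, -, hpD, hpO⟩ := hT D O hD hO hcover hne ⟨t, ht, htO⟩
  exact hdisj p hpD hpO

theorem component_eq {α : Ordinal} (hα : 1 ≤ α) (x y : ↥(level z α))
    (hy : (y : UTree C z) ≠ (x : UTree C z)) :
    connectedComponentIn {w : ↥(level z α) | w ≠ x} y =
      {q : ↥(level z α) | (q : UTree C z) ≠ (x : UTree C z) ∧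
        dirOpt (x : UTree C z) (q : UTree C z) = dirOpt (x : UTree C z) (y : UTree C z)} := by
  have hmemS : ∀ q : ↥(level z α), q ∈ {w : ↥(level z α) | w ≠ x} ↔
      (q : UTree C z) ≠ (x : UTree C z) := by
    intro q
    constructor
    · intro h he; exact h (Subtype.ext he)
    · intro h he; exact h (congrArg Subtype.val he)
  have hyS : y ∈ {w : ↥(level z α) | w ≠ x} := (hmemS y).mpr hy
  have hyD : y ∈ {q : ↥(level z α) | (q : UTree C z) ≠ (x : UTree C z) ∧
      dirOpt (x : UTree C z) (q : UTree C z) = dirOpt (x : UTree C z) (y : UTree C z)} :=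
    ⟨hy, rfl⟩
  have hDS : {q : ↥(level z α) | (q : UTree C z) ≠ (x : UTree C z) ∧
      dirOpt (x : UTree C z) (q : UTree C z) = dirOpt (x : UTree C z) (y : UTree C z)} ⊆
      {w : ↥(level z α) | w ≠ x} := fun q hq => (hmemS q).mpr hq.1
  have hDconn : IsPreconnected {q : ↥(level z α) | (q : UTree C z) ≠ (x : UTree C z) ∧
      dirOpt (x : UTree C z) (q : UTree C z) = dirOpt (x : UTree C z) (y : UTree C z)} := by
    rcases ho : dirOpt (x : UTree C z) (y : UTree C z) with _ | v
    · apply IsConnected.isPreconnected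
      apply IsPathConnected.isConnected
      have hbase : ((⟨cconst ((x : UTree C z).ρ - 1), cconst_mem_level α⟩ : ↥(level z α)) :
          UTree C z) ≠ (x : UTree C z) ∧ dirOpt (x : UTree C z)
          ((⟨cconst ((x : UTree C z).ρ - 1), cconst_mem_level α⟩ : ↥(level z α)) :
            UTree C z) = none := by
        have hlt : wedgeρ (cconst ((x : UTree C z).ρ - 1) : UTree C z) (x : UTree C z) <
            (x : UTree C z).ρ :=
          lt_of_le_of_lt (wedgeρ_le_rho_left _ _) (by rw [cconst_rho]; linarith)
        exact ⟨ne_of_wedge_lt hlt, dirOpt_eq_none_iff.mpr hlt⟩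
      refine ⟨⟨cconst ((x : UTree C z).ρ - 1), cconst_mem_level α⟩, hbase, ?_⟩
      intro q hq
      exact (joined_class_none q hq.1 hq.2).symm
    · apply IsConnected.isPreconnected
      apply IsPathConnected.isConnected
      have hbase : ((⟨extend (x : UTree C z) v, comp_extend_le hα x.2 v⟩ : ↥(level z α)) :
          UTree C z) ≠ (x : UTree C z) ∧ dirOpt (x : UTree C z)
          ((⟨extend (x : UTree C z) v, comp_extend_le hα x.2 v⟩ : ↥(level z α)) :
            UTree C z) = some v := by
        refine ⟨ne_of_rho_gt (by rw [extend_rho]; linarith), ?_⟩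
        refine dirOpt_eq_some_iff.mpr ⟨?_, extend_f_rho _ v⟩
        rw [wedgeρ_extend]
        exact lt_irrefl _
      refine ⟨⟨extend (x : UTree C z) v, comp_extend_le hα x.2 v⟩, hbase, ?_⟩
      intro q hq
      exact (joined_class_some hα x.2 v q hq.1 hq.2).symm
  apply subset_antisymm
  · apply subset_of_clopen_aux isPreconnected_connectedComponentIn
      (isOpen_dirClassP (x : UTree C z)
        (· = dirOpt (x : UTree C z) (y : UTree C z)))
      (isOpen_dirClassP (x : UTree C z)
        (· ≠ dirOpt (x : UTree C z) (y : UTree C z)))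
      (fun p h1 h2 => h2.2 h1.2) ?_
      ⟨y, mem_connectedComponentIn hyS, hyD⟩
    intro q hq
    have hqS := connectedComponentIn_subset _ _ hq
    have hqc : (q : UTree C z) ≠ (x : UTree C z) := (hmemS q).mp hqS
    rcases em (dirOpt (x : UTree C z) (q : UTree C z) =
        dirOpt (x : UTree C z) (y : UTree C z)) with h | h
    · exact Or.inl ⟨hqc, h⟩
    · exact Or.inr ⟨hqc, h⟩
  · exact hDconn.subset_connectedComponentIn hyD hDS

theorem valenceAt_eq {α : Ordinal} (hα : 1 ≤ α) (x : ↥(level z α)) :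
    valenceAt x = Cardinal.mk C + 1 := by
  have hwit : ∀ o : Option C, ∃ q : ↥(level z α),
      (q : UTree C z) ≠ (x : UTree C z) ∧ dirOpt (x : UTree C z) (q : UTree C z) = o := by
    intro o
    rcases o with _ | v
    · refine ⟨⟨cconst ((x : UTree C z).ρ - 1), cconst_mem_level α⟩, ?_⟩
      have hlt : wedgeρ (cconst ((x : UTree C z).ρ - 1) : UTree C z) (x : UTree C z) <
          (x : UTree C z).ρ :=
        lt_of_le_of_lt (wedgeρ_le_rho_left _ _) (by rw [cconst_rho]; linarith)
      exact ⟨ne_of_wedge_lt hlt, dirOpt_eq_none_iff.mpr hlt⟩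
    · refine ⟨⟨extend (x : UTree C z) v, comp_extend_le hα x.2 v⟩, ?_, ?_⟩
      · exact ne_of_rho_gt (by rw [extend_rho]; linarith)
      · refine dirOpt_eq_some_iff.mpr ⟨?_, extend_f_rho _ v⟩
        rw [wedgeρ_extend]
        exact lt_irrefl _
  choose wit hwit1 hwit2 using hwit
  have hdir : ∀ o : Option C, IsDirectionAt x {q : ↥(level z α) |
      (q : UTree C z) ≠ (x : UTree C z) ∧ dirOpt (x : UTree C z) (q : UTree C z) = o} := by
    intro o
    refine ⟨wit o, fun he => (hwit1 o) (congrArg Subtype.val he), ?_⟩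
    rw [component_eq hα x (wit o) (hwit1 o), hwit2 o]
  have hbij : Function.Bijective (fun o : Option C =>
      (⟨_, hdir o⟩ : {D : Set ↥(level z α) // IsDirectionAt x D})) := by
    constructor
    · intro o1 o2 he
      have he' : {q : ↥(level z α) | (q : UTree C z) ≠ (x : UTree C z) ∧
          dirOpt (x : UTree C z) (q : UTree C z) = o1} = {q : ↥(level z α) |
          (q : UTree C z) ≠ (x : UTree C z) ∧
          dirOpt (x : UTree C z) (q : UTree C z) = o2} := congrArg Subtype.val he
      have hmem : wit o1 ∈ {q : ↥(level z α) | (q : UTree C z) ≠ (x : UTree C z) ∧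
          dirOpt (x : UTree C z) (q : UTree C z) = o1} := ⟨hwit1 o1, hwit2 o1⟩
      rw [he'] at hmem
      rw [← hwit2 o1, hmem.2]
    · rintro ⟨D, y0, hy0ne, rfl⟩
      have hy0c : (y0 : UTree C z) ≠ (x : UTree C z) := fun he => hy0ne (Subtype.ext he)
      refine ⟨dirOpt (x : UTree C z) (y0 : UTree C z), ?_⟩
      apply Subtype.ext
      show {q : ↥(level z α) | (q : UTree C z) ≠ (x : UTree C z) ∧
        dirOpt (x : UTree C z) (q : UTree C z) = dirOpt (x : UTree C z) (y0 : UTree C z)} =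
        connectedComponentIn {w : ↥(level z α) | w ≠ x} y0
      rw [component_eq hα x y0 hy0c]
  have hcard : Cardinal.mk {D : Set ↥(level z α) // IsDirectionAt x D} =
      Cardinal.mk (Option C) :=
    (Cardinal.mk_congr (Equiv.ofBijective _ hbij)).symm
  rw [valenceAt, hcard, Cardinal.mk_option]

end UTree


/-- For `κ ≥ 3` and a countable ordinal `α ≥ 1`, `(T_κ^{[α]}, d)` is a real tree and every
point of `T_κ^{[α]}` has valence `κ`. -/
theorem stmt6 (κ : Cardinal) (hκ : 3 ≤ κ) (C : Type) (z : C) (hC : IsLabelSet κ C)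
    (α : Ordinal) (hα1 : 1 ≤ α) (hαc : IsCountableOrdinal α) :
    IsRealTree ↥(UTree.level z α) ∧
    ∀ x : ↥(UTree.level z α), valenceAt x = κ := by
  refine ⟨⟨fun x y => UTree.exists_geodesic x y,
    fun x y γ₁ γ₂ h1 h2 => UTree.arcs_unique x y γ₁ γ₂ h1 h2⟩, fun x => ?_⟩
  rw [UTree.valenceAt_eq hα1 x]
  rcases lt_or_ge κ Cardinal.aleph0 with h | h
  · exact hC.2 h
  · rw [hC.1 h]
    exact Cardinal.add_one_eq h

end
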